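/- Let J₀ be a two-sided p-periodic Jacobi matrix with parameters (a⁰,b⁰) and p ≥ 2, and let J = J(a,b) be a half-line Jacobi operator with bounded parameters. Suppose Δ_{J₀}(J) − S^p − S^{−p} is Hilbert–Schmidt, i.e., Σ_{k,ℓ≥1} |(Δ_{J₀}(J) − S^p − S^{−p})_{kℓ}|² < ∞. Then: Σ_{n≥1} (a_n a_{n+1} ⋯ a_{n+p−1} − a⁰_n a⁰_{n+1} ⋯ a⁰_{n+p−1})² < ∞; Σ_{n≥1} (Σ_{j=0}^{p−1} (b_{n+j} − b⁰_{n+j}))² < ∞; Σ_{n≥1} (a_{n+p} − a_n)² < ∞; and Σ_{n≥1} (b_{n+p} − b_n)² < ∞. -/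

import Mathlib

open scoped ComplexConjugate

noncomputable section

/-- The half-line Hilbert space `ℓ²({1,2,…})`, realized inside `ℓ²(ℕ)` with
site `0` playing no role. -/
abbrev HN : Type := lp (fun _ : ℕ => ℂ) 2

/-- The standard basis vectors. -/
def deltaN (k : ℕ) : HN := lp.single 2 k 1

/-- Matrix entries `A_{kℓ} = ⟨δ_k, A δ_ℓ⟩`. -/
def entryN (A : HN →L[ℂ] HN) (k l : ℕ) : ℂ := inner ℂ (deltaN k) (A (deltaN l))

/-- `J` acts as the half-line Jacobi operator with parameters `(a,b)`. -/
def IsHalfJacobi (a b : ℕ → ℝ) (J : HN →L[ℂ] HN) : Prop :=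
  ∀ u : HN, (J u) 0 = 0 ∧
    (J u) 1 = (b 1 : ℂ) * u 1 + (a 1 : ℂ) * u 2 ∧
    ∀ n : ℕ, 2 ≤ n →
      (J u) n = (a (n - 1) : ℂ) * u (n - 1) + (b n : ℂ) * u n + (a n : ℂ) * u (n + 1)

/-- `S` acts as the half-line right shift: `(Su)_1 = 0`, `(Su)_{n+1} = u_n` for
`n ≥ 1`; site `0` is annihilated. -/
def IsHalfShift (S : HN →L[ℂ] HN) : Prop :=
  ∀ u : HN, (S u) 0 = 0 ∧ (S u) 1 = 0 ∧ ∀ n : ℕ, 1 ≤ n → (S u) (n + 1) = u n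

/-- The transfer matrix `Λ_n(x) = (1/a_n)·[[x − b_n, −1], [a_n², 0]]`. -/
def lamMat (a b : ℤ → ℝ) (n : ℤ) : Matrix (Fin 2) (Fin 2) (Polynomial ℝ) :=
  Polynomial.C (a n)⁻¹ • !![Polynomial.X - Polynomial.C (b n), -1;
    Polynomial.C ((a n) ^ 2), 0]

/-- The ordered product `Λ_n ⋯ Λ_2 Λ_1`. -/
def tMat (a b : ℤ → ℝ) : ℕ → Matrix (Fin 2) (Fin 2) (Polynomial ℝ)
  | 0 => 1
  | n + 1 => lamMat a b ((n : ℤ) + 1) * tMat a b n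

/-- The discriminant `Δ_{(a,b)}(x) = Tr(Λ_p(x) ⋯ Λ_1(x))`. -/
def disc (a b : ℤ → ℝ) (p : ℕ) : Polynomial ℝ := Matrix.trace (tMat a b p)

/-- Evaluation of a real polynomial at a bounded operator. -/
def polyOpN (q : Polynomial ℝ) (A : HN →L[ℂ] HN) : HN →L[ℂ] HN :=
  Polynomial.aeval A (q.map (algebraMap ℝ ℂ))

lemma deltaN_apply (k n : ℕ) : (deltaN k : ∀ _ : ℕ, ℂ) n = if n = k then 1 else 0 := by
  simp [deltaN, lp.single_apply, Pi.single_apply]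

lemma inner_deltaN_left (k : ℕ) (u : HN) : (inner ℂ (deltaN k) u : ℂ) = u k := by
  simpa [deltaN] using lp.inner_single_left (𝕜 := ℂ) k (1 : ℂ) u

variable {a b : ℕ → ℝ} {J : HN →L[ℂ] HN}

lemma J_delta_one (hJ : IsHalfJacobi a b J) :
    J (deltaN 1) = (b 1 : ℂ) • deltaN 1 + (a 1 : ℂ) • deltaN 2 := by
  apply lp.ext
  funext n
  obtain ⟨h0, h1, h2⟩ := hJ (deltaN 1)
  simp only [lp.coeFn_add, lp.coeFn_smul, Pi.add_apply, Pi.smul_apply, smul_eq_mul]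
  match n with
  | 0 => simp [h0, deltaN_apply]
  | 1 => simp [h1, deltaN_apply]
  | (m+2) =>
    rw [h2 (m+2) (by omega)]
    by_cases h : m = 0 <;> simp [deltaN_apply, h] <;> omega

set_option maxHeartbeats 1000000 in
lemma J_delta (hJ : IsHalfJacobi a b J) (l : ℕ) (hl : 2 ≤ l) :
    J (deltaN l) = (a (l-1) : ℂ) • deltaN (l-1) + (b l : ℂ) • deltaN l
      + (a l : ℂ) • deltaN (l+1) := by
  obtain ⟨t, rfl⟩ : ∃ t, l = t + 2 := ⟨l - 2, by omega⟩
  apply lp.ext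
  funext n
  obtain ⟨h0, h1, h2⟩ := hJ (deltaN (t+2))
  simp only [lp.coeFn_add, lp.coeFn_smul, Pi.add_apply, Pi.smul_apply, smul_eq_mul,
    show t + 2 - 1 = t + 1 from rfl]
  match n with
  | 0 =>
    rw [h0]
    simp only [deltaN_apply]
    split_ifs <;> first | (exfalso; first | assumption | omega) | rfl | ring
  | 1 =>
    rw [h1]
    simp only [deltaN_apply]
    by_cases ht : t = 0
    · subst ht; norm_num
    · split_ifs <;> first | (exfalso; first | assumption | omega) | rfl | ring
  | (m+2) =>
    rw [h2 (m+2) (by omega)]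
    simp only [deltaN_apply, show m + 2 - 1 = m + 1 from rfl]
    by_cases hA : m = t
    · subst hA
      split_ifs <;> first | (exfalso; first | assumption | omega) | rfl | ring
    · by_cases hB : t = m + 1
      · subst hB
        split_ifs <;> first | (exfalso; first | assumption | omega) | rfl | ring
      · by_cases hC : m = t + 1
        · subst hC
          split_ifs <;> first | (exfalso; first | assumption | omega) | rfl | ring
        · split_ifs <;> first | (exfalso; first | assumption | omega) | rfl | ring

/-- entry of powers of J -/
def EJ (J : HN →L[ℂ] HN) (m k l : ℕ) : ℂ := entryN (J^m) k l

lemma EJ_zero (k l : ℕ) : EJ J 0 k l = if k = l then 1 else 0 := by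
  simp [EJ, entryN, inner_deltaN_left, deltaN_apply]

lemma EJ_rec (hJ : IsHalfJacobi a b J) (m k l : ℕ) (hl : 2 ≤ l) :
    EJ J (m+1) k l = (a (l-1) : ℂ) * EJ J m k (l-1) + (b l : ℂ) * EJ J m k l
      + (a l : ℂ) * EJ J m k (l+1) := by
  have : (J^(m+1)) (deltaN l) = (J^m) (J (deltaN l)) := by
    rw [pow_succ]; rfl
  simp only [EJ, entryN, this, J_delta hJ l hl, map_add, map_smul,
    inner_add_right, inner_smul_right, smul_eq_mul]

lemma EJ_rec_one (hJ : IsHalfJacobi a b J) (m k : ℕ) :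
    EJ J (m+1) k 1 = (b 1 : ℂ) * EJ J m k 1 + (a 1 : ℂ) * EJ J m k 2 := by
  have : (J^(m+1)) (deltaN 1) = (J^m) (J (deltaN 1)) := by
    rw [pow_succ]; rfl
  simp only [EJ, entryN, this, J_delta_one hJ, map_add, map_smul,
    inner_add_right, inner_smul_right, smul_eq_mul]

lemma EJ_upper (hJ : IsHalfJacobi a b J) (m : ℕ) :
    ∀ k l : ℕ, 1 ≤ k → k + m < l → EJ J m k l = 0 := by
  induction m with
  | zero => intro k l hk h; rw [EJ_zero]; rw [if_neg (by omega)]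
  | succ m ih =>
    intro k l hk h
    rw [EJ_rec hJ m k l (by omega)]
    rw [ih k (l-1) hk (by omega), ih k l hk (by omega), ih k (l+1) hk (by omega)]
    ring

lemma EJ_top (hJ : IsHalfJacobi a b J) (m : ℕ) :
    ∀ k : ℕ, 1 ≤ k → EJ J m k (k+m) = ∏ j ∈ Finset.range m, (a (k+j) : ℂ) := by
  induction m with
  | zero => intro k hk; simp [EJ_zero]
  | succ m ih =>
    intro k hk
    rw [show k + (m+1) = (k+m)+1 by ring, EJ_rec hJ m k ((k+m)+1) (by omega)]
    rw [show (k+m)+1-1 = k+m from rfl, ih k hk,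
      EJ_upper hJ m k ((k+m)+1) hk (by omega), EJ_upper hJ m k ((k+m)+1+1) hk (by omega),
      Finset.prod_range_succ]
    push_cast
    ring

lemma EJ_sub (hJ : IsHalfJacobi a b J) (m : ℕ) :
    ∀ k : ℕ, 1 ≤ k → EJ J (m+1) k (k+m) =
      (∏ j ∈ Finset.range m, (a (k+j) : ℂ)) * ∑ j ∈ Finset.range (m+1), (b (k+j) : ℂ) := by
  induction m with
  | zero =>
    intro k hk
    match k, hk with
    | 1, _ => rw [EJ_rec_one hJ 0 1]; simp [EJ_zero]
    | (k+2), _ =>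
      rw [show (k+2) + 0 = k+2 from rfl, EJ_rec hJ 0 (k+2) (k+2) (by omega)]
      rw [EJ_zero, EJ_zero, EJ_zero]
      rw [if_neg (by omega), if_pos rfl, if_neg (by omega)]
      simp
  | succ m ih =>
    intro k hk
    rw [show k + (m+1) = (k+m)+1 by ring, EJ_rec hJ (m+1) k ((k+m)+1) (by omega)]
    have htop := EJ_top hJ (m+1) k hk
    rw [show k + (m+1) = k + m + 1 from rfl] at htop
    rw [show (k+m)+1-1 = k+m from rfl, ih k hk, htop,
      EJ_upper hJ (m+1) k ((k+m)+1+1) hk (by omega)]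
    rw [Finset.prod_range_succ, Finset.sum_range_succ (f := fun j => (b (k+j) : ℂ)) (n := m+1),
      Finset.sum_range_succ (f := fun j => (b (k+j) : ℂ)) (n := m)]
    rw [← add_assoc k m 1]
    ring

lemma shift_delta {S : HN →L[ℂ] HN} (hS : IsHalfShift S) (l : ℕ) (hl : 1 ≤ l) :
    S (deltaN l) = deltaN (l+1) := by
  apply lp.ext
  funext n
  obtain ⟨h0, h1, h2⟩ := hS (deltaN l)
  match n with
  | 0 => rw [h0, deltaN_apply, if_neg (by omega)]
  | 1 => rw [h1, deltaN_apply, if_neg (by omega)]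
  | (m+1) =>
    match m with
    | 0 => rw [h1, deltaN_apply, if_neg (by omega)]
    | (m+1) =>
      rw [h2 (m+1) (by omega), deltaN_apply, deltaN_apply]
      exact if_congr (by omega) rfl rfl

lemma shift_pow_delta {S : HN →L[ℂ] HN} (hS : IsHalfShift S) (m l : ℕ) (hl : 1 ≤ l) :
    (S^m) (deltaN l) = deltaN (l+m) := by
  induction m with
  | zero => rfl
  | succ m ih =>
    have : (S^(m+1)) (deltaN l) = S ((S^m) (deltaN l)) := by rw [pow_succ']; rfl
    rw [this, ih, shift_delta hS (l+m) (by omega), ← add_assoc]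

lemma entry_shift_pow {S : HN →L[ℂ] HN} (hS : IsHalfShift S) (m k l : ℕ) (hl : 1 ≤ l) :
    entryN (S^m) k l = if k = l + m then 1 else 0 := by
  rw [entryN, shift_pow_delta hS m l hl, inner_deltaN_left, deltaN_apply]

lemma entry_adj_shift_pow {S : HN →L[ℂ] HN} (hS : IsHalfShift S) (m k l : ℕ) (hk : 1 ≤ k) :
    entryN ((ContinuousLinearMap.adjoint S)^m) k l = if l = k + m then 1 else 0 := by
  have hadj : (ContinuousLinearMap.adjoint S)^m = ContinuousLinearMap.adjoint (S^m) := by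
    rw [← ContinuousLinearMap.star_eq_adjoint, ← star_pow, ContinuousLinearMap.star_eq_adjoint]
  rw [entryN, hadj, ContinuousLinearMap.adjoint_inner_right,
    shift_pow_delta hS m k hk, inner_deltaN_left, deltaN_apply]
  exact if_congr eq_comm rfl rfl

open Polynomial in
lemma tMat_succ_entries (a0 b0 : ℤ → ℝ) (n : ℕ) :
    tMat a0 b0 (n+1) 0 0
      = C (a0 ((n:ℤ)+1))⁻¹ * ((X - C (b0 ((n:ℤ)+1))) * tMat a0 b0 n 0 0 - tMat a0 b0 n 1 0) ∧
    tMat a0 b0 (n+1) 0 1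
      = C (a0 ((n:ℤ)+1))⁻¹ * ((X - C (b0 ((n:ℤ)+1))) * tMat a0 b0 n 0 1 - tMat a0 b0 n 1 1) ∧
    tMat a0 b0 (n+1) 1 0
      = C (a0 ((n:ℤ)+1))⁻¹ * (C ((a0 ((n:ℤ)+1))^2) * tMat a0 b0 n 0 0) ∧
    tMat a0 b0 (n+1) 1 1
      = C (a0 ((n:ℤ)+1))⁻¹ * (C ((a0 ((n:ℤ)+1))^2) * tMat a0 b0 n 0 1) := by
  refine ⟨?_, ?_, ?_, ?_⟩ <;>
  · show (lamMat a0 b0 ((n:ℤ)+1) * tMat a0 b0 n) _ _ = _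
    simp [lamMat, Matrix.mul_apply, Fin.sum_univ_two, Matrix.smul_apply, smul_eq_mul]
    ring

open Polynomial in
lemma tMat_coeffs (a0 b0 : ℤ → ℝ) : ∀ m : ℕ,
    (∀ i, m+1 < i → (tMat a0 b0 (m+1) 0 0).coeff i = 0) ∧
    (tMat a0 b0 (m+1) 0 0).coeff (m+1) = (∏ j ∈ Finset.range (m+1), a0 ((j:ℤ)+1))⁻¹ ∧
    (tMat a0 b0 (m+1) 0 0).coeff m
      = -(∑ j ∈ Finset.range (m+1), b0 ((j:ℤ)+1)) * (∏ j ∈ Finset.range (m+1), a0 ((j:ℤ)+1))⁻¹ ∧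
    (∀ i, m+1 ≤ i → (tMat a0 b0 (m+1) 0 1).coeff i = 0) ∧
    (∀ i, m+1 ≤ i → (tMat a0 b0 (m+1) 1 0).coeff i = 0) ∧
    (∀ i, m ≤ i → (tMat a0 b0 (m+1) 1 1).coeff i = 0) := by
  intro m
  induction m with
  | zero =>
    obtain ⟨e00, e01, e10, e11⟩ := tMat_succ_entries a0 b0 0
    have h1 : tMat a0 b0 0 = 1 := rfl
    rw [h1] at e00 e01 e10 e11
    simp only [Matrix.one_apply, if_pos rfl, if_neg (by decide : ¬((0:Fin 2) = 1)),
      if_neg (by decide : ¬((1:Fin 2) = 0))] at e00 e01 e10 e11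
    norm_num at e00 e01 e10 e11
    refine ⟨?_, ?_, ?_, ?_, ?_, ?_⟩
    · intro i hi
      rw [e00]
      obtain ⟨i, rfl⟩ : ∃ i', i = i' + 2 := ⟨i - 2, by omega⟩
      simp [coeff_C, mul_comm, coeff_X]
    · rw [e00]; simp
    · rw [e00]; simp [mul_comm]
    · intro i hi; rw [e01]
      obtain ⟨i, rfl⟩ : ∃ i', i = i' + 1 := ⟨i - 1, by omega⟩
      simp [coeff_C]
    · intro i hi; rw [e10]
      obtain ⟨i, rfl⟩ : ∃ i', i = i' + 1 := ⟨i - 1, by omega⟩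
      rw [← Polynomial.C_pow, coeff_C_mul, Polynomial.coeff_C, if_neg (by omega)]
      ring
    · intro i hi; rw [e11]; simp
  | succ m ih =>
    obtain ⟨h00top, h00lead, h00sub, h01, h10, h11⟩ := ih
    obtain ⟨e00, e01, e10, e11⟩ := tMat_succ_entries a0 b0 (m+1)
    have hprod : (∏ j ∈ Finset.range (m+2), a0 ((j:ℤ)+1))
        = (∏ j ∈ Finset.range (m+1), a0 ((j:ℤ)+1)) * a0 (((m+1:ℕ):ℤ)+1) := by
      rw [Finset.prod_range_succ]
    have hsum : (∑ j ∈ Finset.range (m+2), b0 ((j:ℤ)+1))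
        = (∑ j ∈ Finset.range (m+1), b0 ((j:ℤ)+1)) + b0 (((m+1:ℕ):ℤ)+1) := by
      rw [Finset.sum_range_succ]
    refine ⟨?_, ?_, ?_, ?_, ?_, ?_⟩
    · intro i hi
      rw [e00]
      obtain ⟨i, rfl⟩ : ∃ i', i = i' + 1 := ⟨i - 1, by omega⟩
      simp only [sub_mul, coeff_sub, coeff_C_mul, coeff_X_mul]
      rw [h00top i (by omega), h00top (i+1) (by omega), h10 (i+1) (by omega)]
      ring
    · rw [e00]
      simp only [sub_mul, coeff_sub, coeff_C_mul]
      rw [show m+1+1 = (m+1)+1 from rfl, coeff_X_mul]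
      rw [h00lead, h00top (m+2) (by omega), h10 (m+2) (by omega), hprod, mul_inv]
      ring
    · rw [e00]
      simp only [sub_mul, coeff_sub, coeff_C_mul]
      rw [show m+1 = m+1 from rfl, coeff_X_mul]
      rw [h00sub, h00lead, h10 (m+1) (by omega), hprod, hsum, mul_inv]
      field_simp
      ring
    · intro i hi
      rw [e01]
      obtain ⟨i, rfl⟩ : ∃ i', i = i' + 1 := ⟨i - 1, by omega⟩
      simp only [sub_mul, coeff_sub, coeff_C_mul, coeff_X_mul]
      rw [h01 i (by omega), h01 (i+1) (by omega), h11 (i+1) (by omega)]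
      ring
    · intro i hi
      rw [e10, coeff_C_mul, coeff_C_mul, h00top i (by omega)]
      ring
    · intro i hi
      rw [e11, coeff_C_mul, coeff_C_mul, h01 i (by omega)]
      ring

open Polynomial in
lemma disc_facts (a0 b0 : ℤ → ℝ) (m : ℕ) :
    (∀ i, m+1 < i → (disc a0 b0 (m+1)).coeff i = 0) ∧
    (disc a0 b0 (m+1)).coeff (m+1) = (∏ j ∈ Finset.range (m+1), a0 ((j:ℤ)+1))⁻¹ ∧
    (disc a0 b0 (m+1)).coeff m
      = -(∑ j ∈ Finset.range (m+1), b0 ((j:ℤ)+1)) * (∏ j ∈ Finset.range (m+1), a0 ((j:ℤ)+1))⁻¹ := by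
  obtain ⟨h00top, h00lead, h00sub, h01, h10, h11⟩ := tMat_coeffs a0 b0 m
  have htr : disc a0 b0 (m+1) = tMat a0 b0 (m+1) 0 0 + tMat a0 b0 (m+1) 1 1 := by
    simp [disc, Matrix.trace, Fin.sum_univ_two]
  refine ⟨?_, ?_, ?_⟩
  · intro i hi
    rw [htr, coeff_add, h00top i hi, h11 i (by omega)]; ring
  · rw [htr, coeff_add, h00lead, h11 (m+1) (by omega)]; ring
  · rw [htr, coeff_add, h00sub, h11 m (by omega)]; ring

open Polynomial in
lemma disc_natDegree_le (a0 b0 : ℤ → ℝ) (m : ℕ) : (disc a0 b0 (m+1)).natDegree ≤ m+1 := by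
  rw [Polynomial.natDegree_le_iff_coeff_eq_zero]
  exact (disc_facts a0 b0 m).1

open Polynomial in
lemma entry_polyOpN (q : Polynomial ℝ) (n : ℕ) (h : q.natDegree < n) (J : HN →L[ℂ] HN)
    (k l : ℕ) :
    entryN (polyOpN q J) k l = ∑ i ∈ Finset.range n, (q.coeff i : ℂ) * EJ J i k l := by
  have hq' : (q.map (algebraMap ℝ ℂ)).natDegree < n :=
    lt_of_le_of_lt Polynomial.natDegree_map_le h
  rw [polyOpN, Polynomial.aeval_eq_sum_range' hq']
  rw [entryN]
  have : ((∑ i ∈ Finset.range n, (q.map (algebraMap ℝ ℂ)).coeff i • J ^ i) (deltaN l))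
      = ∑ i ∈ Finset.range n, ((q.coeff i : ℂ)) • ((J ^ i) (deltaN l)) := by
    rw [ContinuousLinearMap.sum_apply]
    refine Finset.sum_congr rfl fun i _ => ?_
    rw [ContinuousLinearMap.smul_apply, Polynomial.coeff_map]
    rfl
  rw [this, inner_sum]
  refine Finset.sum_congr rfl fun i _ => ?_
  rw [inner_smul_right]
  rfl

lemma window_sum_shift {p : ℕ} (f : ℤ → ℝ) (hf : Function.Periodic f (p:ℤ)) (c : ℤ) :
    ∑ j ∈ Finset.range p, f (c + 1 + j) = ∑ j ∈ Finset.range p, f (c + j) := by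
  have h1 : ∑ j ∈ Finset.range p, f (c + 1 + j) = ∑ j ∈ Finset.range p, f (c + (j+1)) := by
    refine Finset.sum_congr rfl fun j _ => ?_
    congr 1; push_cast; ring
  have h2 : (∑ j ∈ Finset.range p, f (c + (j+1))) + f (c + 0)
      = ∑ j ∈ Finset.range (p+1), f (c + j) := by
    rw [Finset.sum_range_succ' (fun j => f (c + (j:ℤ))) p]
    push_cast
    norm_num
  have h3 : ∑ j ∈ Finset.range (p+1), f (c + j) = (∑ j ∈ Finset.range p, f (c + j)) + f (c + p) := by
    rw [Finset.sum_range_succ]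
  have h4 : f (c + p) = f (c + 0) := by
    have := hf c
    simpa [add_comm] using this
  rw [h1] at *
  linarith [h1, h2, h3]

lemma window_prod_shift {p : ℕ} (f : ℤ → ℝ) (hf : Function.Periodic f (p:ℤ))
    (hne : ∀ n, f n ≠ 0) (c : ℤ) :
    ∏ j ∈ Finset.range p, f (c + 1 + j) = ∏ j ∈ Finset.range p, f (c + j) := by
  have h1 : ∏ j ∈ Finset.range p, f (c + 1 + j) = ∏ j ∈ Finset.range p, f (c + (j+1)) := by
    refine Finset.prod_congr rfl fun j _ => ?_
    congr 1; push_cast; ring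
  have h2 : (∏ j ∈ Finset.range p, f (c + (j+1))) * f (c + 0)
      = ∏ j ∈ Finset.range (p+1), f (c + j) := by
    rw [Finset.prod_range_succ' (fun j => f (c + (j:ℤ))) p]
    push_cast
    norm_num
  have h3 : ∏ j ∈ Finset.range (p+1), f (c + j) = (∏ j ∈ Finset.range p, f (c + j)) * f (c + p) := by
    rw [Finset.prod_range_succ]
  have h4 : f (c + p) = f (c + 0) := by
    have := hf c
    simpa [add_comm] using this
  rw [h4] at h3
  rw [h1]
  exact mul_right_cancel₀ (hne (c+0)) (h2.trans h3)

lemma window_sum (p : ℕ) (f : ℤ → ℝ) (hf : Function.Periodic f (p:ℤ)) (n : ℕ) :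
    ∑ j ∈ Finset.range p, f ((n:ℤ) + 1 + j) = ∑ j ∈ Finset.range p, f ((j:ℤ) + 1) := by
  induction n with
  | zero => exact Finset.sum_congr rfl fun j _ => by push_cast; ring_nf
  | succ n ih =>
    have := window_sum_shift f hf ((n:ℤ)+1)
    have hc : ((n+1 : ℕ) : ℤ) + 1 = (n:ℤ) + 1 + 1 := by push_cast; ring
    rw [hc]
    calc ∑ j ∈ Finset.range p, f ((n:ℤ) + 1 + 1 + j) = ∑ j ∈ Finset.range p, f ((n:ℤ)+1+j) := this
    _ = _ := ih

lemma window_prod (p : ℕ) (f : ℤ → ℝ) (hf : Function.Periodic f (p:ℤ)) (hne : ∀ n, f n ≠ 0) (n : ℕ) :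
    ∏ j ∈ Finset.range p, f ((n:ℤ) + 1 + j) = ∏ j ∈ Finset.range p, f ((j:ℤ) + 1) := by
  induction n with
  | zero => exact Finset.prod_congr rfl fun j _ => by push_cast; ring_nf
  | succ n ih =>
    have := window_prod_shift f hf hne ((n:ℤ)+1)
    have hc : ((n+1 : ℕ) : ℤ) + 1 = (n:ℤ) + 1 + 1 := by push_cast; ring
    rw [hc]
    calc ∏ j ∈ Finset.range p, f ((n:ℤ) + 1 + 1 + j) = ∏ j ∈ Finset.range p, f ((n:ℤ)+1+j) := this
    _ = _ := ih

lemma entryN_sub (X Y : HN →L[ℂ] HN) (k l : ℕ) :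
    entryN (X - Y) k l = entryN X k l - entryN Y k l := by
  simp [entryN, ContinuousLinearMap.sub_apply, inner_sub_right]

lemma norm_sq_ofReal (r : ℝ) : ‖((r : ℝ) : ℂ)‖^2 = r^2 := by
  rw [Complex.norm_real, Real.norm_eq_abs, sq_abs]


set_option maxHeartbeats 2000000

/-- consequences of `Δ_{J₀}(J) − S^p − S^{−p}` being
Hilbert–Schmidt. -/
theorem statement17 (p : ℕ) (hp : 2 ≤ p)
    (a0 b0 : ℤ → ℝ) (ha0pos : ∀ n, 0 < a0 n)
    (hpera : Function.Periodic a0 (p : ℤ)) (hperb : Function.Periodic b0 (p : ℤ))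
    (a b : ℕ → ℝ) (hbdd : ∃ C : ℝ, ∀ n : ℕ, |a n| ≤ C ∧ |b n| ≤ C)
    (hpos : ∀ n : ℕ, 1 ≤ n → 0 < a n)
    (J : HN →L[ℂ] HN) (hJ : IsHalfJacobi a b J)
    (S : HN →L[ℂ] HN) (hS : IsHalfShift S)
    (hHS : Summable (fun kl : ℕ × ℕ =>
      ‖entryN (polyOpN (disc a0 b0 p) J - S ^ p - (ContinuousLinearMap.adjoint S) ^ p)
        (kl.1 + 1) (kl.2 + 1)‖ ^ 2)) :
    Summable (fun n : ℕ =>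
      ((∏ j ∈ Finset.range p, a (n + 1 + j)) -
        ∏ j ∈ Finset.range p, a0 (((n : ℤ) + 1) + j)) ^ 2) ∧
    Summable (fun n : ℕ =>
      (∑ j ∈ Finset.range p, (b (n + 1 + j) - b0 (((n : ℤ) + 1) + j))) ^ 2) ∧
    Summable (fun n : ℕ => (a (n + 1 + p) - a (n + 1)) ^ 2) ∧
    Summable (fun n : ℕ => (b (n + 1 + p) - b (n + 1)) ^ 2) := by
  classical
  obtain ⟨C, hC⟩ := hbdd
  have haC : ∀ n, a n ≤ C := fun n => (le_abs_self _).trans (hC n).1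
  have hCpos : 0 < C := lt_of_lt_of_le (hpos 1 le_rfl) (haC 1)
  obtain ⟨m, rfl⟩ : ∃ m, p = m + 2 := ⟨p - 2, by omega⟩
  have ha0ne : ∀ n, a0 n ≠ 0 := fun n => ne_of_gt (ha0pos n)
  -- raw disc facts
  obtain ⟨hqtop, hqlead, hqsub⟩ := disc_facts a0 b0 (m+1)
  rw [show m+1+1 = m+2 from rfl] at hqlead hqsub
  have hwinA : ∀ n : ℕ, ∏ j ∈ Finset.range (m+2), a0 ((n:ℤ)+1+j)
      = ∏ j ∈ Finset.range (m+2), a0 ((j:ℤ)+1) := window_prod (m+2) a0 hpera ha0ne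
  have hwinB : ∀ n : ℕ, ∑ j ∈ Finset.range (m+2), b0 ((n:ℤ)+1+j)
      = ∑ j ∈ Finset.range (m+2), b0 ((j:ℤ)+1) := window_sum (m+2) b0 hperb
  have hApos : (0:ℝ) < ∏ j ∈ Finset.range (m+2), a0 ((j:ℤ)+1) :=
    Finset.prod_pos fun j _ => ha0pos _
  set A : ℝ := ∏ j ∈ Finset.range (m+2), a0 ((j:ℤ)+1) with hAdef
  set B : ℝ := ∑ j ∈ Finset.range (m+2), b0 ((j:ℤ)+1) with hBdef
  have hAne : A ≠ 0 := ne_of_gt hApos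
  set D := polyOpN (disc a0 b0 (m+2)) J - S ^ (m+2)
      - (ContinuousLinearMap.adjoint S) ^ (m+2) with hD
  -- abbreviations
  set F : ℕ → ℝ := fun k => ∏ j ∈ Finset.range (m+2), a (k+1+j) with hF
  set G : ℕ → ℝ := fun k => ∏ j ∈ Finset.range (m+1), a (k+1+j) with hG
  set Tb : ℕ → ℝ := fun k => (∑ j ∈ Finset.range (m+2), b (k+1+j)) - B with hTb
  -- entry on the p-th upper diagonal
  have hE1 : ∀ k : ℕ, entryN D (k+1) (k+1+(m+2)) = ((F k * A⁻¹ - 1 : ℝ) : ℂ) := by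
    intro k
    rw [hD, entryN_sub, entryN_sub]
    rw [entry_polyOpN (disc a0 b0 (m+2)) (m+3)
      (lt_of_le_of_lt (disc_natDegree_le a0 b0 (m+1)) (by omega)) J]
    rw [entry_shift_pow hS (m+2) (k+1) (k+1+(m+2)) (by omega),
        entry_adj_shift_pow hS (m+2) (k+1) (k+1+(m+2)) (by omega)]
    rw [if_neg (by omega), if_pos rfl]
    rw [Finset.sum_range_succ]
    have hz : ∑ i ∈ Finset.range (m+2),
        ((disc a0 b0 (m+2)).coeff i : ℂ) * EJ J i (k+1) (k+1+(m+2)) = 0 :=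
      Finset.sum_eq_zero fun i hi => by
        rw [EJ_upper hJ i (k+1) (k+1+(m+2)) (by omega)
          (by have := Finset.mem_range.mp hi; omega)]; ring
    rw [hz, EJ_top hJ (m+2) (k+1) (by omega), hqlead, hF]
    push_cast
    ring
  -- entry on the (p-1)-th upper diagonal
  have hE2 : ∀ k : ℕ, entryN D (k+1) (k+1+(m+1)) = ((G k * Tb k * A⁻¹ : ℝ) : ℂ) := by
    intro k
    rw [hD, entryN_sub, entryN_sub]
    rw [entry_polyOpN (disc a0 b0 (m+2)) (m+3)
      (lt_of_le_of_lt (disc_natDegree_le a0 b0 (m+1)) (by omega)) J]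
    rw [entry_shift_pow hS (m+2) (k+1) (k+1+(m+1)) (by omega),
        entry_adj_shift_pow hS (m+2) (k+1) (k+1+(m+1)) (by omega)]
    rw [if_neg (by omega), if_neg (by omega)]
    rw [Finset.sum_range_succ, Finset.sum_range_succ]
    have hz : ∑ i ∈ Finset.range (m+1),
        ((disc a0 b0 (m+2)).coeff i : ℂ) * EJ J i (k+1) (k+1+(m+1)) = 0 :=
      Finset.sum_eq_zero fun i hi => by
        rw [EJ_upper hJ i (k+1) (k+1+(m+1)) (by omega)
          (by have := Finset.mem_range.mp hi; omega)]; ring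
    have hsub := EJ_sub hJ (m+1) (k+1) (by omega)
    rw [show m+1+1 = m+2 from rfl] at hsub
    rw [hz, hsub, EJ_top hJ (m+1) (k+1) (by omega), hqlead, hqsub, hG, hTb, hBdef]
    push_cast
    ring
  -- diagonal summability
  have hdiag1 : Summable (fun k : ℕ => ‖entryN D (k+1) (k+1+(m+2))‖^2) := by
    have hinj : Function.Injective (fun k : ℕ => ((k, k+(m+2)) : ℕ × ℕ)) := by
      intro x y h
      exact (Prod.ext_iff.mp h).1
    have h := hHS.comp_injective hinj
    refine h.congr fun k => ?_
    simp only [Function.comp]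
    rw [show k+(m+2)+1 = k+1+(m+2) by omega]
  have hdiag2 : Summable (fun k : ℕ => ‖entryN D (k+1) (k+1+(m+1))‖^2) := by
    have hinj : Function.Injective (fun k : ℕ => ((k, k+(m+1)) : ℕ × ℕ)) := by
      intro x y h
      exact (Prod.ext_iff.mp h).1
    have h := hHS.comp_injective hinj
    refine h.congr fun k => ?_
    simp only [Function.comp]
    rw [show k+(m+1)+1 = k+1+(m+1) by omega]
  have hsq1 : Summable (fun k : ℕ => (F k * A⁻¹ - 1)^2) := by
    refine hdiag1.congr fun k => ?_
    rw [hE1 k, norm_sq_ofReal]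
  have hsq2 : Summable (fun k : ℕ => (G k * Tb k * A⁻¹)^2) := by
    refine hdiag2.congr fun k => ?_
    rw [hE2 k, norm_sq_ofReal]
  -- statement 1
  have hFA : Summable (fun k : ℕ => (F k - A)^2) := by
    have h := hsq1.mul_left (A^2)
    refine h.congr fun k => ?_
    field_simp
  have hst1 : Summable (fun n : ℕ =>
      ((∏ j ∈ Finset.range (m+2), a (n + 1 + j)) -
        ∏ j ∈ Finset.range (m+2), a0 (((n : ℤ) + 1) + j)) ^ 2) := by
    refine hFA.congr fun n => ?_
    rw [hwinA n]
  -- eventual lower bound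
  have htend := hsq1.tendsto_atTop_zero
  have hev : ∀ᶠ k in Filter.atTop, (F k * A⁻¹ - 1)^2 < (1:ℝ)/4 :=
    htend.eventually (gt_mem_nhds (by norm_num))
  obtain ⟨N, hN⟩ := Filter.eventually_atTop.mp hev
  have hflow : ∀ k, N ≤ k → A/2 < F k := by
    intro k hk
    have h := hN k hk
    have hu : 1/2 < F k * A⁻¹ := by nlinarith [h]
    have hx : F k * A⁻¹ * A = F k := by field_simp
    nlinarith [mul_lt_mul_of_pos_right hu hApos]
  -- statement 3
  have hFA' : Summable (fun k : ℕ => (F (k+1) - A)^2) := (summable_nat_add_iff 1).mpr hFA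
  have hd2 : Summable (fun k : ℕ => (F (k+1) - F k)^2) := by
    refine Summable.of_nonneg_of_le (fun k => sq_nonneg _) (fun k => ?_)
      ((hFA'.mul_left 2).add (hFA.mul_left 2))
    nlinarith [sq_nonneg (F (k+1) + F k - 2*A)]
  have key3 : ∀ n : ℕ, N ≤ n →
      (a (n+1+(m+2)) - a (n+1))^2 ≤ (2*C/A)^2 * (F (n+1) - F n)^2 := by
    intro n hn
    set β : ℝ := ∏ j ∈ Finset.range (m+1), a (n+2+j) with hβ
    have hβpos : 0 < β := Finset.prod_pos fun j _ => hpos _ (by omega)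
    have hfact1 : F (n+1) = β * a (n+1+(m+2)) := by
      show (∏ j ∈ Finset.range (m+2), a (n+1+1+j)) = _
      rw [show (m+2) = (m+1)+1 from rfl, Finset.prod_range_succ]
      have h1 : ∏ j ∈ Finset.range (m+1), a (n+1+1+j) = β :=
        Finset.prod_congr rfl fun j _ => rfl
      rw [h1, show n+1+1+(m+1) = n+1+(m+2) by omega]
    have hfact2 : F n = a (n+1) * β := by
      show (∏ j ∈ Finset.range (m+2), a (n+1+j)) = _
      rw [show (m+2) = (m+1)+1 from rfl,
        Finset.prod_range_succ' (fun j => a (n+1+j)) (m+1)]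
      have h1 : ∏ j ∈ Finset.range (m+1), a (n+1+(j+1)) = β :=
        Finset.prod_congr rfl fun j _ => by congr 1; omega
      rw [h1, show n+1+0 = n+1 from rfl, mul_comm]
    have hβge : A/(2*C) ≤ β := by
      have h1 := hflow (n+1) (by omega)
      rw [hfact1] at h1
      have h2 : β * a (n+1+(m+2)) ≤ β * C :=
        mul_le_mul_of_nonneg_left (haC _) (le_of_lt hβpos)
      rw [div_le_iff₀ (by positivity)]
      nlinarith
    have hdiff : F (n+1) - F n = β * (a (n+1+(m+2)) - a (n+1)) := by
      rw [hfact1, hfact2]; ring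
    rw [hdiff]
    have h1 : 1 ≤ (2*C/A)*β := by
      calc (1:ℝ) = (A/(2*C)) * (2*C/A) := by field_simp
      _ ≤ β * (2*C/A) := mul_le_mul_of_nonneg_right hβge (by positivity)
      _ = (2*C/A)*β := by ring
    have h2 : 1 ≤ ((2*C/A)*β)^2 := by nlinarith
    calc (a (n+1+(m+2)) - a (n+1))^2 = 1 * (a (n+1+(m+2)) - a (n+1))^2 := by ring
    _ ≤ ((2*C/A)*β)^2 * (a (n+1+(m+2)) - a (n+1))^2 :=
        mul_le_mul_of_nonneg_right h2 (sq_nonneg _)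
    _ = (2*C/A)^2 * (β * (a (n+1+(m+2)) - a (n+1)))^2 := by ring
  have hst3 : Summable (fun n : ℕ => (a (n + 1 + (m+2)) - a (n + 1)) ^ 2) := by
    rw [← summable_nat_add_iff N]
    refine Summable.of_nonneg_of_le (fun n => sq_nonneg _) (fun n => key3 (n+N) (by omega))
      ((summable_nat_add_iff N).mpr (hd2.mul_left ((2*C/A)^2)))
  -- statement 2
  have key2 : ∀ k : ℕ, N ≤ k → (Tb k)^2 ≤ (2*C)^2 * (G k * Tb k * A⁻¹)^2 := by
    intro k hk
    have hGpos : 0 < G k := Finset.prod_pos fun j _ => hpos _ (by omega)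
    have hfact : F k = G k * a (k+1+(m+1)) := by
      show (∏ j ∈ Finset.range (m+2), a (k+1+j)) = _
      rw [show (m+2) = (m+1)+1 from rfl, Finset.prod_range_succ]
    have hGge : A/(2*C) ≤ G k := by
      have h1 := hflow k hk
      rw [hfact] at h1
      have h2 : G k * a (k+1+(m+1)) ≤ G k * C :=
        mul_le_mul_of_nonneg_left (haC _) (le_of_lt hGpos)
      rw [div_le_iff₀ (by positivity)]
      nlinarith
    have h1 : 1 ≤ (2*C)*(G k)*A⁻¹ := by
      calc (1:ℝ) = (A/(2*C)) * (2*C*A⁻¹) := by field_simp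
      _ ≤ G k * (2*C*A⁻¹) := mul_le_mul_of_nonneg_right hGge (by positivity)
      _ = (2*C)*(G k)*A⁻¹ := by ring
    have h2 : 1 ≤ ((2*C)*(G k)*A⁻¹)^2 := by nlinarith
    calc (Tb k)^2 = 1 * (Tb k)^2 := by ring
    _ ≤ ((2*C)*(G k)*A⁻¹)^2 * (Tb k)^2 := mul_le_mul_of_nonneg_right h2 (sq_nonneg _)
    _ = (2*C)^2 * (G k * Tb k * A⁻¹)^2 := by ring
  have hTb2 : Summable (fun k : ℕ => (Tb k)^2) := by
    rw [← summable_nat_add_iff N]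
    refine Summable.of_nonneg_of_le (fun n => sq_nonneg _) (fun n => key2 (n+N) (by omega))
      ((summable_nat_add_iff N).mpr (hsq2.mul_left ((2*C)^2)))
  have hst2 : Summable (fun n : ℕ =>
      (∑ j ∈ Finset.range (m+2), (b (n + 1 + j) - b0 (((n : ℤ) + 1) + j))) ^ 2) := by
    refine hTb2.congr fun n => ?_
    congr 1
    rw [Finset.sum_sub_distrib, hwinB n, hTb]
  -- statement 4
  have htel : ∀ n : ℕ, b (n+1+(m+2)) - b (n+1) = Tb (n+1) - Tb n := by
    intro n
    have e1 : ∑ j ∈ Finset.range (m+3), b (n+1+j)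
        = (∑ j ∈ Finset.range (m+2), b (n+1+(j+1))) + b (n+1+0) :=
      Finset.sum_range_succ' (fun j => b (n+1+j)) (m+2)
    have e2 : ∑ j ∈ Finset.range (m+3), b (n+1+j)
        = (∑ j ∈ Finset.range (m+2), b (n+1+j)) + b (n+1+(m+2)) :=
      Finset.sum_range_succ (fun j => b (n+1+j)) (m+2)
    have e3 : ∑ j ∈ Finset.range (m+2), b (n+1+1+j)
        = ∑ j ∈ Finset.range (m+2), b (n+1+(j+1)) :=
      Finset.sum_congr rfl fun j _ => by congr 1; omega
    have hTbs : Tb (n+1) - Tb n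
        = (∑ j ∈ Finset.range (m+2), b (n+1+1+j)) - ∑ j ∈ Finset.range (m+2), b (n+1+j) := by
      rw [hTb]; ring
    rw [hTbs, e3]
    have : b (n+1+0) = b (n+1) := by congr 1
    linarith [e1, e2]
  have hst4 : Summable (fun n : ℕ => (b (n + 1 + (m+2)) - b (n + 1)) ^ 2) := by
    have hTb2' : Summable (fun k : ℕ => (Tb (k+1))^2) := (summable_nat_add_iff 1).mpr hTb2
    refine Summable.of_nonneg_of_le (fun k => sq_nonneg _) (fun k => ?_)
      ((hTb2'.mul_left 2).add (hTb2.mul_left 2))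
    rw [htel k]
    nlinarith [sq_nonneg (Tb (k+1) + Tb k)]
  exact ⟨hst1, hst2, hst3, hst4⟩
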